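/- Let P_k: {0,1}^k → [0,1] for 1 ≤ k ≤ N be a consistent family of symmetric probability functions (i.e., summing the last argument of P_{k+1} over {0,1} gives P_k). Define correlation functions recursively: G_1 := P_1 and G_k(r_1,...,r_k) := P_k(r_1,...,r_k) minus the sum over all partitions of the argument set {r_1,...,r_k} into at least two blocks of the product of G-functions over the blocks. Then for every k ≥ 2 and all r_2,...,r_k ∈ {0,1}: G_k(1,r_2,...,r_k) + G_k(0,r_2,...,r_k) = 0. -/
import Mathlib


open Finset
open scoped Classical

/-- The sum, over all set partitions of `{1,…,k}` into at least two blocks, of the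
product over the blocks `B` of `G_{|B|}` evaluated at the arguments `(r_i)_{i∈B}`,
taken in increasing index order. -/
noncomputable def partSum (G : (k : ℕ) → (Fin k → Bool) → ℝ) (k : ℕ)
    (r : Fin k → Bool) : ℝ :=
  ∑ π : Finset (Finset (Fin k)),
    if ((∀ B ∈ π, B.Nonempty) ∧ (∀ i : Fin k, ∃! B, B ∈ π ∧ i ∈ B)) ∧ 2 ≤ π.card then
      ∏ B ∈ π, G B.card (fun j => r (B.orderIsoOfFin rfl j).1)
    else 0

def IsPart {n : ℕ} (π : Finset (Finset (Fin n))) : Prop :=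
  (∀ B ∈ π, B.Nonempty) ∧ (∀ i : Fin n, ∃! B, B ∈ π ∧ i ∈ B)

lemma partSum_def (G : (k : ℕ) → (Fin k → Bool) → ℝ) (n : ℕ) (r : Fin n → Bool) :
    partSum G n r = ∑ π : Finset (Finset (Fin n)),
      if IsPart π ∧ 2 ≤ π.card then
        ∏ B ∈ π, G B.card (fun j => r (B.orderIsoOfFin rfl j).1)
      else 0 := by
  unfold partSum IsPart
  exact Finset.sum_congr rfl fun pi _ => by congr

lemma aux_gcast (G : (k : ℕ) → (Fin k → Bool) → ℝ) {a b : ℕ} (h : a = b) (f : Fin b → Bool) :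
    G a (fun j => f (Fin.cast h j)) = G b f := by subst h; rfl

lemma aux_univ {n : ℕ} (j : Fin (univ : Finset (Fin n)).card) :
    ((univ : Finset (Fin n)).orderEmbOfFin rfl j : Fin n) = Fin.cast (Finset.card_fin n) j := by
  have hmono : StrictMono fun x : Fin (univ : Finset (Fin n)).card =>
      (Fin.cast (Finset.card_fin n) x : Fin n) := fun a b hab => hab
  exact (congrFun (Finset.orderEmbOfFin_unique rfl (fun x => Finset.mem_univ _) hmono) j).symm

lemma partSum_one (G : (k : ℕ) → (Fin k → Bool) → ℝ) (r : Fin 1 → Bool) :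
    partSum G 1 r = 0 := by
  rw [partSum_def]
  apply Finset.sum_eq_zero
  intro π _
  rw [if_neg]
  rintro ⟨⟨hne, hcov⟩, hcard⟩
  obtain ⟨B1, hB1, B2, hB2, hne12⟩ := Finset.one_lt_card.mp hcard
  apply hne12
  have h1 : (0 : Fin 1) ∈ B1 := by
    obtain ⟨x, hx⟩ := hne _ hB1
    rwa [Subsingleton.elim (0 : Fin 1) x]
  have h2 : (0 : Fin 1) ∈ B2 := by
    obtain ⟨x, hx⟩ := hne _ hB2
    rwa [Subsingleton.elim (0 : Fin 1) x]
  ext i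
  rw [Subsingleton.elim i (0 : Fin 1)]
  simp [h1, h2]

lemma Pstep (P : (k : ℕ) → (Fin k → Bool) → ℝ)
    (hsymP : ∀ (k : ℕ) (σ : Equiv.Perm (Fin k)) (r : Fin k → Bool), P k r = P k (r ∘ σ))
    (hconsist : ∀ (k : ℕ) (r : Fin k → Bool),
      P (k+1) (Fin.snoc r true) + P (k+1) (Fin.snoc r false) = P k r)
    (m : ℕ) (r : Fin (m+1) → Bool) :
    P (m+1) (Function.update r ⟨0, Nat.succ_pos m⟩ true)
      + P (m+1) (Function.update r ⟨0, Nat.succ_pos m⟩ false) = P m (fun i => r i.succ) := by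
  have key : ∀ b, Function.update r ⟨0, Nat.succ_pos m⟩ b =
      (Fin.snoc (fun i => r i.succ) b) ∘ (finRotate (m+1)).symm := by
    intro b
    funext i
    induction i using Fin.cases with
    | zero =>
      have hσ : (finRotate (m+1)).symm 0 = Fin.last m := by
        rw [Equiv.symm_apply_eq, finRotate_last]
      simp only [Function.comp_apply, hσ, Fin.snoc_last]
      exact Function.update_self _ _ _
    | succ j =>
      have hσ : (finRotate (m+1)).symm j.succ = j.castSucc := by
        rw [Equiv.symm_apply_eq, finRotate_succ_apply, Fin.coeSucc_eq_succ]
      simp only [Function.comp_apply, hσ, Fin.snoc_castSucc]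
      exact Function.update_of_ne (by simpa using (Fin.succ_ne_zero j)) _ _
  rw [key true, key false, ← hsymP (m+1) (finRotate (m+1)).symm (Fin.snoc _ true),
    ← hsymP (m+1) (finRotate (m+1)).symm (Fin.snoc _ false), hconsist]

lemma fullSum_eq (P : (k : ℕ) → (Fin k → Bool) → ℝ)
    (G : (k : ℕ) → (Fin k → Bool) → ℝ)
    (hG : ∀ (k : ℕ), 1 ≤ k → ∀ r : Fin k → Bool, G k r = P k r - partSum G k r)
    (m : ℕ) (hm : 1 ≤ m) (r' : Fin m → Bool) :
    (∑ π' : Finset (Finset (Fin m)),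
      if IsPart π' then ∏ B ∈ π', G B.card (fun j => r' (B.orderIsoOfFin rfl j).1) else 0)
      = P m r' := by
  have split : ∀ π' : Finset (Finset (Fin m)),
      (if IsPart π' then ∏ B ∈ π', G B.card (fun j => r' (B.orderIsoOfFin rfl j).1) else 0)
      = (if IsPart π' ∧ 2 ≤ π'.card then
          ∏ B ∈ π', G B.card (fun j => r' (B.orderIsoOfFin rfl j).1) else 0)
        + (if π' = {univ} then
          ∏ B ∈ π', G B.card (fun j => r' (B.orderIsoOfFin rfl j).1) else 0) := by
    intro π'
    have huniv_iff : (IsPart π' ∧ ¬ 2 ≤ π'.card) ↔ π' = {univ} := by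
      constructor
      · rintro ⟨⟨hne, hcov⟩, hcard⟩
        have hnonempty : π'.Nonempty := by
          obtain ⟨B, ⟨hB, _⟩, _⟩ := hcov ⟨0, hm⟩
          exact ⟨B, hB⟩
        have hc1 : π'.card = 1 := by
          have := Finset.Nonempty.card_pos hnonempty
          omega
        obtain ⟨B, rfl⟩ := Finset.card_eq_one.mp hc1
        congr 1
        apply Finset.eq_univ_iff_forall.mpr
        intro i
        obtain ⟨B', ⟨hB', hiB'⟩, _⟩ := hcov i
        rwa [Finset.mem_singleton.mp hB'] at hiB'
      · rintro rfl
        refine ⟨⟨fun B hB => ?_, fun i => ?_⟩, by simp⟩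
        · rw [Finset.mem_singleton.mp hB]
          exact ⟨⟨0, hm⟩, Finset.mem_univ _⟩
        · exact ⟨univ, ⟨Finset.mem_singleton_self _, Finset.mem_univ _⟩,
            fun B hB => Finset.mem_singleton.mp hB.1⟩
    by_cases h1 : IsPart π'
    · by_cases h2 : 2 ≤ π'.card
      · rw [if_pos h1, if_pos ⟨h1, h2⟩, if_neg, add_zero]
        intro hx
        exact (huniv_iff.mpr hx).2 h2
      · rw [if_pos h1, if_neg (fun hx => h2 hx.2), if_pos (huniv_iff.mp ⟨h1, h2⟩), zero_add]
    · rw [if_neg h1, if_neg (fun hx => h1 hx.1), if_neg, add_zero]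
      intro hx
      exact h1 (huniv_iff.mpr hx).1
  rw [Finset.sum_congr rfl (fun π' _ => split π'), Finset.sum_add_distrib, ← partSum_def]
  have hsingle : (∑ π' : Finset (Finset (Fin m)),
      if π' = {univ} then ∏ B ∈ π', G B.card (fun j => r' (B.orderIsoOfFin rfl j).1) else 0)
      = G m r' := by
    rw [Finset.sum_ite_eq' Finset.univ ({univ} : Finset (Finset (Fin m)))
      (fun π' => ∏ B ∈ π', G B.card (fun j => r' (B.orderIsoOfFin rfl j).1)), if_pos (Finset.mem_univ _)]
    rw [Finset.prod_singleton]
    have harg : (fun j => r' ((univ : Finset (Fin m)).orderIsoOfFin rfl j).1)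
        = fun j => r' (Fin.cast (Finset.card_fin m) j) := by
      funext j
      rw [Finset.coe_orderIsoOfFin_apply, aux_univ]
    rw [harg, aux_gcast G (Finset.card_fin m) r']
  rw [hsingle, hG m hm r']
  ring

def uB {m : ℕ} (B' : Finset (Fin m)) : Finset (Fin (m+1)) := B'.image Fin.succ
def dB {m : ℕ} (B : Finset (Fin (m+1))) : Finset (Fin m) :=
  univ.filter fun i => i.succ ∈ B

lemma aux_comp' {md n c : ℕ} (φ : Fin md → Fin n) (hφ : StrictMono φ) (B : Finset (Fin md))
    (h : B.card = c) (h2 : (B.image φ).card = c) (j : Fin c) :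
    (B.image φ).orderEmbOfFin h2 j = φ (B.orderEmbOfFin h j) := by
  have hf : ∀ x : Fin c, φ (B.orderEmbOfFin h x) ∈ B.image φ := fun x =>
    Finset.mem_image_of_mem _ (Finset.orderEmbOfFin_mem B h x)
  have hmono : StrictMono fun x => φ (B.orderEmbOfFin h x) :=
    hφ.comp (B.orderEmbOfFin h).strictMono
  exact (congrFun (Finset.orderEmbOfFin_unique h2 hf hmono) j).symm

lemma aux_recast {n c : ℕ} (B : Finset (Fin n)) (h : B.card = c) (j : Fin B.card) :
    B.orderEmbOfFin rfl j = B.orderEmbOfFin h (Fin.cast h j) := by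
  have hf : ∀ x : Fin B.card, B.orderEmbOfFin h (Fin.cast h x) ∈ B := fun x =>
    Finset.orderEmbOfFin_mem B h _
  have hmono : StrictMono fun x : Fin B.card => B.orderEmbOfFin h (Fin.cast h x) :=
    (B.orderEmbOfFin h).strictMono.comp (fun a b hab => hab)
  exact congrFun (Finset.orderEmbOfFin_unique rfl hf hmono) j

lemma aux_zero {n : ℕ} (h0 : 0 < n) (B : Finset (Fin n)) (hz : (⟨0, h0⟩ : Fin n) ∈ B)
    (hc : 0 < B.card) : (B.orderEmbOfFin rfl ⟨0, hc⟩ : Fin n) = ⟨0, h0⟩ := by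
  obtain ⟨j, hj⟩ : ∃ j, B.orderEmbOfFin rfl j = ⟨0, h0⟩ := by
    have h := Finset.range_orderEmbOfFin B (rfl : B.card = B.card)
    have h2 : (⟨0, h0⟩ : Fin n) ∈ Set.range (B.orderEmbOfFin rfl) := by
      rw [h]; exact_mod_cast hz
    exact h2
  apply le_antisymm
  · rw [← hj]
    exact (B.orderEmbOfFin rfl).monotone (Fin.mk_le_mk.mpr (Nat.zero_le _))
  · exact Fin.mk_le_mk.mpr (Nat.zero_le _)

lemma hblock (G : (k : ℕ) → (Fin k → Bool) → ℝ) {m : ℕ} (r : Fin (m+1) → Bool)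
    (B' : Finset (Fin m)) :
    (G (uB B').card fun j => r (((uB B').orderIsoOfFin rfl j).1))
      = G B'.card fun j => r ((B'.orderIsoOfFin rfl j).1).succ := by
  have hcard : B'.card = (uB B').card :=
    (Finset.card_image_of_injective B' (Fin.succ_injective m)).symm
  rw [← aux_gcast G hcard (fun j => r (((uB B').orderIsoOfFin rfl j).1))]
  congr 1
  funext j
  rw [Finset.coe_orderIsoOfFin_apply, Finset.coe_orderIsoOfFin_apply]
  congr 1
  have h1 : (uB B').orderEmbOfFin rfl (Fin.cast hcard j)
      = Fin.succ (B'.orderEmbOfFin hcard (Fin.cast hcard j)) :=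
    aux_comp' Fin.succ Fin.strictMono_succ B' hcard rfl (Fin.cast hcard j)
  rw [h1, ← aux_recast B' hcard j]

lemma keylemma (G : (k : ℕ) → (Fin k → Bool) → ℝ) (m : ℕ) (hm : 1 ≤ m) (r : Fin (m+1) → Bool)
    (hG1 : G 1 (fun _ => true) + G 1 (fun _ => false) = 1)
    (IH : ∀ (c : ℕ) (hc2 : 2 ≤ c) (hclt : c < m+1) (s : Fin c → Bool),
      G c (Function.update s ⟨0, by omega⟩ true)
        + G c (Function.update s ⟨0, by omega⟩ false) = 0) :
    partSum G (m+1) (Function.update r ⟨0, Nat.succ_pos m⟩ true)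
      + partSum G (m+1) (Function.update r ⟨0, Nat.succ_pos m⟩ false)
    = ∑ π' : Finset (Finset (Fin m)),
        if IsPart π' then
          ∏ B ∈ π', G B.card (fun j => r ((B.orderIsoOfFin rfl j).1).succ)
        else 0 := by
  set z : Fin (m+1) := ⟨0, Nat.succ_pos m⟩ with hzdef
  have hz0 : z = 0 := rfl
  rw [partSum_def, partSum_def, ← Finset.sum_add_distrib]
  have main : ∀ π : Finset (Finset (Fin (m+1))),
      ((if IsPart π ∧ 2 ≤ π.card then
          ∏ B ∈ π, G B.card (fun j => Function.update r z true ((B.orderIsoOfFin rfl j).1))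
        else 0)
       + (if IsPart π ∧ 2 ≤ π.card then
          ∏ B ∈ π, G B.card (fun j => Function.update r z false ((B.orderIsoOfFin rfl j).1))
        else 0))
      = (if IsPart π ∧ 2 ≤ π.card ∧ {z} ∈ π then
          ∏ B ∈ π.erase {z}, G B.card (fun j => r ((B.orderIsoOfFin rfl j).1))
        else 0) := by
    intro π
    by_cases hc : IsPart π ∧ 2 ≤ π.card
    · obtain ⟨⟨hne, hcov⟩, hcard⟩ := hc
      obtain ⟨B₀, ⟨hB₀π, hzB₀⟩, huniq⟩ := hcov z
      have hnotz : ∀ B ∈ π.erase B₀, z ∉ B := by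
        intro B hB hzB
        exact (Finset.ne_of_mem_erase hB) (huniq B ⟨Finset.mem_of_mem_erase hB, hzB⟩)
      have hfactor : ∀ (b : Bool), ∀ B ∈ π.erase B₀,
          (G B.card fun j => Function.update r z b ((B.orderIsoOfFin rfl j).1))
            = G B.card fun j => r ((B.orderIsoOfFin rfl j).1) := by
        intro b B hB
        congr 1
        funext j
        refine Function.update_of_ne (fun h => hnotz B hB ?_) _ _
        rw [← h]
        exact (B.orderIsoOfFin rfl j).2
      have hprod : ∀ b : Bool,
          (∏ B ∈ π, G B.card fun j => Function.update r z b ((B.orderIsoOfFin rfl j).1))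
          = (G B₀.card fun j => Function.update r z b ((B₀.orderIsoOfFin rfl j).1))
            * ∏ B ∈ π.erase B₀, G B.card fun j => r ((B.orderIsoOfFin rfl j).1) := by
        intro b
        rw [← Finset.mul_prod_erase π _ hB₀π]
        exact congrArg _ (Finset.prod_congr rfl (hfactor b))
      rw [if_pos ⟨⟨hne, hcov⟩, hcard⟩, if_pos ⟨⟨hne, hcov⟩, hcard⟩, hprod true, hprod false,
        ← add_mul]
      by_cases hB0 : B₀ = ({z} : Finset (Fin (m+1)))
      · subst hB0
        rw [if_pos ⟨⟨hne, hcov⟩, hcard, hB₀π⟩]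
        have hone : ∀ b : Bool,
            (G ({z} : Finset (Fin (m+1))).card fun j =>
              Function.update r z b (((({z} : Finset (Fin (m+1))).orderIsoOfFin rfl) j).1))
            = G 1 (fun _ => b) := by
          intro b
          have harg : (fun j =>
              Function.update r z b (((({z} : Finset (Fin (m+1))).orderIsoOfFin rfl) j).1))
              = fun j : Fin ({z} : Finset (Fin (m+1))).card =>
                  (fun _ : Fin 1 => b) (Fin.cast (Finset.card_singleton z) j) := by
            funext j
            have hmem := ((({z} : Finset (Fin (m+1))).orderIsoOfFin rfl) j).2
            have hval : ((({z} : Finset (Fin (m+1))).orderIsoOfFin rfl) j).1 = z :=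
              Finset.mem_singleton.mp hmem
            rw [hval, Function.update_self]
          rw [harg, aux_gcast G (Finset.card_singleton z) (fun _ => b)]
        rw [hone true, hone false, hG1, one_mul]
      · have hsingnot : ({z} : Finset (Fin (m+1))) ∉ π := fun hmem =>
          hB0 (huniq {z} ⟨hmem, Finset.mem_singleton_self z⟩).symm
        rw [if_neg (fun hx => hsingnot hx.2.2)]
        have hcB : 2 ≤ B₀.card := by
          obtain ⟨x, hxB, hxz⟩ : ∃ x ∈ B₀, x ≠ z := by
            by_contra hcon
            push_neg at hcon
            exact hB0 (Finset.eq_singleton_iff_unique_mem.mpr ⟨hzB₀, hcon⟩)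
          exact Finset.one_lt_card.mpr ⟨x, hxB, z, hzB₀, hxz⟩
        have hlt : B₀.card < m + 1 := by
          obtain ⟨B₁, hB₁, B₂, hB₂, hne12⟩ := Finset.one_lt_card.mp hcard
          have hother : ∃ B ∈ π, B ≠ B₀ := by
            rcases eq_or_ne B₁ B₀ with h | h
            · exact ⟨B₂, hB₂, fun e => hne12 (h.trans e.symm)⟩
            · exact ⟨B₁, hB₁, h⟩
          obtain ⟨B₁', hB₁', hne'⟩ := hother
          obtain ⟨y, hy⟩ := hne _ hB₁'
          have hyB₀ : y ∉ B₀ := by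
            intro hyB₀
            obtain ⟨C, _, hCuniq⟩ := hcov y
            exact hne' ((hCuniq B₁' ⟨hB₁', hy⟩).trans (hCuniq B₀ ⟨hB₀π, hyB₀⟩).symm)
          have hne_univ : B₀ ≠ univ := fun h => hyB₀ (h ▸ Finset.mem_univ y)
          have hlt' := Finset.card_lt_card (Finset.ssubset_univ_iff.mpr hne_univ)
          simpa using hlt'
        have hpos : 0 < B₀.card := by omega
        have hzero : ((B₀.orderIsoOfFin rfl ⟨0, hpos⟩).1) = z := by
          rw [Finset.coe_orderIsoOfFin_apply]
          exact aux_zero (Nat.succ_pos m) B₀ hzB₀ hpos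
        have harg : ∀ b : Bool,
            (fun j => Function.update r z b ((B₀.orderIsoOfFin rfl j).1))
            = Function.update (fun j : Fin B₀.card => r ((B₀.orderIsoOfFin rfl j).1))
                ⟨0, hpos⟩ b := by
          intro b
          funext j
          by_cases hj : j = ⟨0, hpos⟩
          · subst hj
            rw [hzero, Function.update_self, Function.update_self]
          · have hne2 : ((B₀.orderIsoOfFin rfl j).1) ≠ z := by
              intro h
              apply hj
              have heq : (B₀.orderIsoOfFin rfl j) = (B₀.orderIsoOfFin rfl ⟨0, hpos⟩) :=
                Subtype.ext (h.trans hzero.symm)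
              exact (B₀.orderIsoOfFin rfl).injective heq
            rw [Function.update_of_ne hne2, Function.update_of_ne hj]
        rw [harg true, harg false,
          IH B₀.card hcB hlt (fun j : Fin B₀.card => r ((B₀.orderIsoOfFin rfl j).1)), zero_mul]
    · rw [if_neg hc, if_neg hc, if_neg (fun hx => hc ⟨hx.1, hx.2.1⟩), add_zero]
  rw [Finset.sum_congr rfl (fun π _ => main π)]
  rw [← Finset.sum_filter, ← Finset.sum_filter]
  -- bijection
  have hud : ∀ B' : Finset (Fin m), dB (uB B') = B' := by
    intro B'
    ext i
    simp [dB, uB, Fin.succ_inj]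
  have hdu : ∀ B : Finset (Fin (m+1)), z ∉ B → uB (dB B) = B := by
    intro B hzB
    ext x
    simp only [uB, dB, Finset.mem_image, Finset.mem_filter, Finset.mem_univ, true_and]
    constructor
    · rintro ⟨a, ha, rfl⟩; exact ha
    · intro hx
      obtain ⟨j, rfl⟩ := Fin.eq_succ_of_ne_zero (fun h0 : x = 0 => hzB (by rwa [hz0, ← h0]))
      exact ⟨j, hx, rfl⟩
  have hzsing : ∀ (π' : Finset (Finset (Fin m))), (∀ B' ∈ π', B'.Nonempty) →
      ({z} : Finset (Fin (m+1))) ∉ π'.image uB := by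
    intro π' hne hmem
    obtain ⟨B', hB', heq⟩ := Finset.mem_image.mp hmem
    obtain ⟨a, ha⟩ := hne B' hB'
    have h1 : a.succ ∈ uB B' := Finset.mem_image_of_mem _ ha
    rw [heq] at h1
    have h2 := Finset.mem_singleton.mp h1
    exact Fin.succ_ne_zero a (h2.trans hz0)
  apply Finset.sum_nbij' (i := fun π => (π.erase {z}).image dB)
    (j := fun π' => insert ({z} : Finset (Fin (m+1))) (π'.image uB))
  · -- hi : maps into target filter
    intro π hπ
    simp only [Finset.mem_filter, Finset.mem_univ, true_and] at hπ ⊢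
    obtain ⟨⟨hne, hcov⟩, hcard, hzmem⟩ := hπ
    have hnotz : ∀ B ∈ π.erase {z}, z ∉ B := by
      intro B hB hzB
      obtain ⟨C, hC, hCuniq⟩ := hcov z
      exact Finset.ne_of_mem_erase hB
        ((hCuniq B ⟨Finset.mem_of_mem_erase hB, hzB⟩).trans
          (hCuniq {z} ⟨hzmem, Finset.mem_singleton_self z⟩).symm)
    constructor
    · intro D hD
      obtain ⟨B, hB, rfl⟩ := Finset.mem_image.mp hD
      obtain ⟨x, hx⟩ := hne B (Finset.mem_of_mem_erase hB)
      have hxz : x ≠ 0 := fun h => hnotz B hB (by rw [hz0, ← h]; exact hx)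
      obtain ⟨j, rfl⟩ := Fin.eq_succ_of_ne_zero hxz
      exact ⟨j, by simp [dB, hx]⟩
    · intro i
      obtain ⟨C, ⟨hCπ, hiC⟩, hCuniq⟩ := hcov i.succ
      have hCne : C ≠ {z} := by
        intro h
        rw [h] at hiC
        exact Fin.succ_ne_zero i ((Finset.mem_singleton.mp hiC).trans hz0)
      refine ⟨dB C, ⟨Finset.mem_image_of_mem _ (Finset.mem_erase.mpr ⟨hCne, hCπ⟩),
        by simp [dB, hiC]⟩, ?_⟩
      rintro D ⟨hD, hiD⟩
      obtain ⟨B, hB, rfl⟩ := Finset.mem_image.mp hD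
      have hsucc : i.succ ∈ B := by simpa [dB] using hiD
      rw [hCuniq B ⟨Finset.mem_of_mem_erase hB, hsucc⟩]
  · -- hj
    intro π' hπ'
    simp only [Finset.mem_filter, Finset.mem_univ, true_and] at hπ' ⊢
    obtain ⟨hne, hcov⟩ := hπ'
    refine ⟨⟨?_, ?_⟩, ?_, Finset.mem_insert_self _ _⟩
    · intro B hB
      rcases Finset.mem_insert.mp hB with rfl | hB'
      · exact ⟨z, Finset.mem_singleton_self z⟩
      · obtain ⟨B', hB'', rfl⟩ := Finset.mem_image.mp hB'
        obtain ⟨a, ha⟩ := hne B' hB''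
        exact ⟨a.succ, Finset.mem_image_of_mem _ ha⟩
    · intro i
      by_cases hi : i = z
      · refine ⟨{z}, ⟨Finset.mem_insert_self _ _, by rw [hi]; exact Finset.mem_singleton_self z⟩, ?_⟩
        rintro D ⟨hD, hiD⟩
        rcases Finset.mem_insert.mp hD with rfl | hD'
        · rfl
        · exfalso
          obtain ⟨B', hB', rfl⟩ := Finset.mem_image.mp hD'
          obtain ⟨a, _, ha⟩ := Finset.mem_image.mp hiD
          exact Fin.succ_ne_zero a (by rw [ha, hi, hz0])
      · obtain ⟨j, rfl⟩ := Fin.eq_succ_of_ne_zero (fun h => hi (h.trans hz0.symm))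
        obtain ⟨B', ⟨hB', hjB'⟩, hB'uniq⟩ := hcov j
        refine ⟨uB B', ⟨Finset.mem_insert_of_mem (Finset.mem_image_of_mem _ hB'),
          Finset.mem_image_of_mem _ hjB'⟩, ?_⟩
        rintro D ⟨hD, hjD⟩
        rcases Finset.mem_insert.mp hD with rfl | hD'
        · exact absurd ((Finset.mem_singleton.mp hjD).trans hz0) (Fin.succ_ne_zero j)
        · obtain ⟨C', hC', rfl⟩ := Finset.mem_image.mp hD'
          obtain ⟨a, haC', ha⟩ := Finset.mem_image.mp hjD
          have haj : a = j := Fin.succ_inj.mp ha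
          subst haj
          rw [hB'uniq C' ⟨hC', haC'⟩]
    · rw [Finset.card_insert_of_notMem (hzsing π' hne)]
      obtain ⟨B, ⟨hB, _⟩, _⟩ := hcov ⟨0, hm⟩
      have : (π'.image uB).Nonempty := ⟨uB B, Finset.mem_image_of_mem _ hB⟩
      have := Finset.Nonempty.card_pos this
      omega
  · -- left_inv
    intro π hπ
    simp only [Finset.mem_filter, Finset.mem_univ, true_and] at hπ
    obtain ⟨⟨hne, hcov⟩, hcard, hzmem⟩ := hπ
    have hnotz : ∀ B ∈ π.erase {z}, z ∉ B := by
      intro B hB hzB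
      obtain ⟨C, hC, hCuniq⟩ := hcov z
      exact Finset.ne_of_mem_erase hB
        ((hCuniq B ⟨Finset.mem_of_mem_erase hB, hzB⟩).trans
          (hCuniq {z} ⟨hzmem, Finset.mem_singleton_self z⟩).symm)
    rw [Finset.image_image,
      Finset.image_congr (f := uB ∘ dB) (g := id) (fun B hB => hdu B (hnotz B hB)),
      Finset.image_id, Finset.insert_erase hzmem]
  · -- right_inv
    intro π' hπ'
    simp only [Finset.mem_filter, Finset.mem_univ, true_and] at hπ'
    obtain ⟨hne, hcov⟩ := hπ'
    rw [Finset.erase_insert (hzsing π' hne), Finset.image_image,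
      Finset.image_congr (f := dB ∘ uB) (g := id) (fun B' hB' => hud B'), Finset.image_id]
  · -- values
    intro π hπ
    simp only [Finset.mem_filter, Finset.mem_univ, true_and] at hπ
    obtain ⟨⟨hne, hcov⟩, hcard, hzmem⟩ := hπ
    have hnotz : ∀ B ∈ π.erase {z}, z ∉ B := by
      intro B hB hzB
      obtain ⟨C, hC, hCuniq⟩ := hcov z
      exact Finset.ne_of_mem_erase hB
        ((hCuniq B ⟨Finset.mem_of_mem_erase hB, hzB⟩).trans
          (hCuniq {z} ⟨hzmem, Finset.mem_singleton_self z⟩).symm)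
    rw [Finset.prod_image]
    · apply Finset.prod_congr rfl
      intro B hB
      have hb := hblock G r (dB B)
      rw [hdu B (hnotz B hB)] at hb
      exact hb
    · intro B hB C hC hBC
      have h1 := hdu B (hnotz B hB)
      have h2 := hdu C (hnotz C hC)
      rw [← h1, ← h2, hBC]

theorem stmt2 (P : (k : ℕ) → (Fin k → Bool) → ℝ)
    -- `P` is a family of symmetric probability functions:
    (hsymP : ∀ (k : ℕ) (σ : Equiv.Perm (Fin k)) (r : Fin k → Bool), P k r = P k (r ∘ σ))
    (hnorm : ∀ r : Fin 0 → Bool, P 0 r = 1)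
    -- consistency: summing the last argument of `P_{k+1}` over `{0,1}` gives `P_k`:
    (hconsist : ∀ (k : ℕ) (r : Fin k → Bool),
      P (k+1) (Fin.snoc r true) + P (k+1) (Fin.snoc r false) = P k r)
    -- `G` is the family of correlation functions, defined recursively:
    (G : (k : ℕ) → (Fin k → Bool) → ℝ)
    (hG : ∀ (k : ℕ), 1 ≤ k → ∀ r : Fin k → Bool, G k r = P k r - partSum G k r)
    (k : ℕ) (hk : 2 ≤ k) (r : Fin k → Bool) :
    G k (Function.update r ⟨0, by omega⟩ true) +
      G k (Function.update r ⟨0, by omega⟩ false) = 0 := by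
  induction k using Nat.strong_induction_on with
  | _ k ih =>
  obtain ⟨m, rfl⟩ : ∃ m, k = m + 1 := ⟨k - 1, by omega⟩
  have hm : 1 ≤ m := by omega
  have hG1sum : G 1 (fun _ => true) + G 1 (fun _ => false) = 1 := by
    have e1 : ∀ b : Bool, Fin.snoc (fun i : Fin 0 => i.elim0) b = fun _ : Fin 1 => b := by
      intro b
      funext j
      simp [Fin.snoc]
    have h0 := hconsist 0 (fun i => i.elim0)
    rw [e1 true, e1 false, hnorm] at h0
    rw [hG 1 le_rfl, hG 1 le_rfl, partSum_one, partSum_one]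
    linarith
  have key := keylemma G m hm r hG1sum (fun c hc2 hclt s => ih c hclt hc2 s)
  have full := fullSum_eq P G hG m hm (fun i => r i.succ)
  have psum := Pstep P hsymP hconsist m r
  have key2 : partSum G (m+1) (Function.update r ⟨0, Nat.succ_pos m⟩ true)
      + partSum G (m+1) (Function.update r ⟨0, Nat.succ_pos m⟩ false)
      = P m (fun i => r i.succ) := key.trans full
  show G (m+1) (Function.update r ⟨0, Nat.succ_pos m⟩ true)
      + G (m+1) (Function.update r ⟨0, Nat.succ_pos m⟩ false) = 0
  rw [hG (m+1) (by omega), hG (m+1) (by omega)]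
  linarith
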